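/- If v : ℝ → ℝ is twice differentiable and satisfies the ODE v″(z) = z·v′(z) for all z, then there exist constants C, D such that v(z) = C·erfi(z/√2) + D for all z. -/

import Mathlib

open Real

noncomputable def erfi (x : ℝ) : ℝ := (2 / Real.sqrt π) * ∫ z in (0:ℝ)..x, Real.exp (z ^ 2)

theorem ode_solution_erfi (v : ℝ → ℝ) (hv : Differentiable ℝ v)
    (hv' : Differentiable ℝ (deriv v))
    (hode : ∀ z : ℝ, deriv (deriv v) z = z * deriv v z) :
    ∃ C D : ℝ, ∀ z : ℝ, v z = C * erfi (z / Real.sqrt 2) + D := by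
  set w := deriv v with hw
  have hwc : Continuous w := hv'.continuous
  have hg : ∀ z, HasDerivAt (fun z => w z * Real.exp (-(z ^ 2) / 2)) 0 z := by
    intro z
    have hw' : HasDerivAt w (z * w z) z := by
      have := (hv' z).hasDerivAt
      rwa [hode z] at this
    have h1 : HasDerivAt (fun z : ℝ => -(z ^ 2) / 2) (-z) z := by
      have h : HasDerivAt (fun z : ℝ => z ^ 2) (2 * z) z := by
        simpa using (hasDerivAt_pow 2 z)
      have := (h.neg).div_const 2
      exact this.congr_deriv (by ring)
    have he : HasDerivAt (fun z : ℝ => Real.exp (-(z ^ 2) / 2))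
        (Real.exp (-(z ^ 2) / 2) * (-z)) z :=
      (Real.hasDerivAt_exp _).comp z h1
    have := hw'.mul he
    exact this.congr_deriv (by ring)
  have hconst : ∀ z, w z = w 0 * Real.exp (z ^ 2 / 2) := by
    intro z
    have hdg : Differentiable ℝ (fun z => w z * Real.exp (-(z ^ 2) / 2)) :=
      fun z => (hg z).differentiableAt
    have h0 := is_const_of_deriv_eq_zero hdg (fun z => (hg z).deriv) z 0
    simp only [ne_eq, two_ne_zero, not_false_eq_true, zero_pow, neg_zero, zero_div, Real.exp_zero, mul_one] at h0
    have hne : Real.exp (-(z ^ 2) / 2) = (Real.exp (z ^ 2 / 2))⁻¹ := by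
      rw [neg_div, Real.exp_neg]
    rw [hne] at h0
    have hpos : Real.exp (z ^ 2 / 2) ≠ 0 := (Real.exp_pos _).ne'
    field_simp at h0
    linarith
  refine ⟨w 0 * Real.sqrt π * Real.sqrt 2 / 2, v 0, fun z => ?_⟩
  have hint : ∫ t in (0:ℝ)..z, w t = v z - v 0 :=
    intervalIntegral.integral_deriv_eq_sub (fun x _ => hv x) (hwc.intervalIntegrable _ _)
  have h1 : ∫ t in (0:ℝ)..z, w t = w 0 * ∫ t in (0:ℝ)..z, Real.exp (t ^ 2 / 2) := by
    rw [← intervalIntegral.integral_const_mul]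
    exact intervalIntegral.integral_congr fun t _ => hconst t
  have h2 : ∫ t in (0:ℝ)..z, Real.exp (t ^ 2 / 2)
      = Real.sqrt 2 * ∫ s in (0:ℝ)..(z / Real.sqrt 2), Real.exp (s ^ 2) := by
    have hc := intervalIntegral.integral_comp_div (a := (0:ℝ)) (b := z)
      (c := Real.sqrt 2) (f := fun s => Real.exp (s ^ 2)) (by positivity)
    simp only [zero_div, smul_eq_mul] at hc
    rw [← hc]
    apply intervalIntegral.integral_congr
    intro t _
    simp only []
    congr 1
    rw [div_pow, Real.sq_sqrt (by norm_num : (2:ℝ) ≥ 0)]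
  have hv0 : v z = v 0 + w 0 * Real.sqrt 2 * ∫ s in (0:ℝ)..(z / Real.sqrt 2), Real.exp (s ^ 2) := by
    have := hint
    rw [h1, h2] at this
    linarith
  rw [hv0, erfi]
  have hπ : Real.sqrt π ≠ 0 := by positivity
  have h2' : Real.sqrt 2 ≠ 0 := by positivity
  field_simp
  ring
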